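/- Let G be a connected graph on vertex set {1,...,n} with n ≥ 2 and Φ = (F_1,...,F_n) with |V(F_i)| ≥ 2 for all i, and suppose γ(F_1) = ... = γ(F_n) and Γ(F_1) = ... = Γ(F_n). Then G[Φ] is well γ-dominated if and only if either (i) G is well γ-dominated and every F_i is complete, or (ii) G is complete and every F_i is well γ-dominated with γ(F_i) = 2. -/

import Mathlib

open scoped Classical

/-- A dominating set: every vertex is in `D` or adjacent to a vertex of `D`. -/
def isDominatingSet {V : Type*} (H : SimpleGraph V) (D : Finset V) : Prop :=
  ∀ v : V, v ∈ D ∨ ∃ u ∈ D, H.Adj u v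

/-- A total dominating set: every vertex has a neighbor in `D`. -/
def isTotalDominatingSet {V : Type*} (H : SimpleGraph V) (D : Finset V) : Prop :=
  ∀ v : V, ∃ u ∈ D, H.Adj u v

def isMinimalDominatingSet {V : Type*} (H : SimpleGraph V) (D : Finset V) : Prop :=
  isDominatingSet H D ∧ ∀ D' : Finset V, D' ⊂ D → ¬ isDominatingSet H D'

def isMinimalTotalDominatingSet {V : Type*} (H : SimpleGraph V) (D : Finset V) : Prop :=
  isTotalDominatingSet H D ∧ ∀ D' : Finset V, D' ⊂ D → ¬ isTotalDominatingSet H D'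

noncomputable def domNum {V : Type*} (H : SimpleGraph V) : ℕ :=
  sInf {k | ∃ D : Finset V, isDominatingSet H D ∧ D.card = k}

noncomputable def totalDomNum {V : Type*} (H : SimpleGraph V) : ℕ :=
  sInf {k | ∃ D : Finset V, isTotalDominatingSet H D ∧ D.card = k}

noncomputable def upperDomNum {V : Type*} (H : SimpleGraph V) : ℕ :=
  sSup {k | ∃ D : Finset V, isMinimalDominatingSet H D ∧ D.card = k}

noncomputable def upperTotalDomNum {V : Type*} (H : SimpleGraph V) : ℕ :=
  sSup {k | ∃ D : Finset V, isMinimalTotalDominatingSet H D ∧ D.card = k}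

/-- Well (γ-)dominated: all minimal dominating sets have the same size. -/
def WellDominated {V : Type*} (H : SimpleGraph V) : Prop :=
  ∀ D₁ D₂ : Finset V, isMinimalDominatingSet H D₁ → isMinimalDominatingSet H D₂ →
    D₁.card = D₂.card

/-- Well γ_t-dominated: all minimal total dominating sets have the same size. -/
def WellTotalDominated {V : Type*} (H : SimpleGraph V) : Prop :=
  ∀ D₁ D₂ : Finset V, isMinimalTotalDominatingSet H D₁ → isMinimalTotalDominatingSet H D₂ →
    D₁.card = D₂.card

/-- Restrained dominating set: dominating and every vertex outside `D` has a
neighbor outside `D`. -/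
def isRestrainedDominatingSet {V : Type*} (H : SimpleGraph V) (D : Finset V) : Prop :=
  isDominatingSet H D ∧ ∀ v ∉ D, ∃ u ∉ D, H.Adj u v

/-- Outer-connected dominating set: dominating and the subgraph induced by the
complement of `D` is connected. -/
def isOuterConnectedDominatingSet {V : Type*} (H : SimpleGraph V) (D : Finset V) : Prop :=
  isDominatingSet H D ∧ (H.induce ((↑D : Set V)ᶜ)).Connected

def isTotalRestrainedDominatingSet {V : Type*} (H : SimpleGraph V) (D : Finset V) : Prop :=
  isTotalDominatingSet H D ∧ ∀ v ∉ D, ∃ u ∉ D, H.Adj u v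

def isTotalOuterConnectedDominatingSet {V : Type*} (H : SimpleGraph V) (D : Finset V) : Prop :=
  isTotalDominatingSet H D ∧ (H.induce ((↑D : Set V)ᶜ)).Connected

noncomputable def restrainedDomNum {V : Type*} (H : SimpleGraph V) : ℕ :=
  sInf {k | ∃ D : Finset V, isRestrainedDominatingSet H D ∧ D.card = k}

noncomputable def ocDomNum {V : Type*} (H : SimpleGraph V) : ℕ :=
  sInf {k | ∃ D : Finset V, isOuterConnectedDominatingSet H D ∧ D.card = k}

noncomputable def totalRestrainedDomNum {V : Type*} (H : SimpleGraph V) : ℕ :=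
  sInf {k | ∃ D : Finset V, isTotalRestrainedDominatingSet H D ∧ D.card = k}

noncomputable def totalOcDomNum {V : Type*} (H : SimpleGraph V) : ℕ :=
  sInf {k | ∃ D : Finset V, isTotalOuterConnectedDominatingSet H D ∧ D.card = k}

/-- Paired dominating set: dominating and the induced subgraph on `D` has a
perfect matching. -/
def isPairedDominatingSet {V : Type*} (H : SimpleGraph V) (D : Finset V) : Prop :=
  isDominatingSet H D ∧
    ∃ M : SimpleGraph.Subgraph (H.induce (↑D : Set V)), M.IsPerfectMatching

noncomputable def pairedDomNum {V : Type*} (H : SimpleGraph V) : ℕ :=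
  sInf {k | ∃ D : Finset V, isPairedDominatingSet H D ∧ D.card = k}

def isIndependentSet {V : Type*} (H : SimpleGraph V) (D : Finset V) : Prop :=
  ∀ u ∈ D, ∀ v ∈ D, ¬ H.Adj u v

def isMaximalIndependentSet {V : Type*} (H : SimpleGraph V) (D : Finset V) : Prop :=
  isIndependentSet H D ∧ ∀ D' : Finset V, D ⊂ D' → ¬ isIndependentSet H D'

/-- The independent domination number `i(H)`. -/
noncomputable def indepDomNum {V : Type*} (H : SimpleGraph V) : ℕ :=
  sInf {k | ∃ D : Finset V, isMaximalIndependentSet H D ∧ D.card = k}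

/-- The independence number `β₀(H)`. -/
noncomputable def indepNum {V : Type*} (H : SimpleGraph V) : ℕ :=
  sSup {k | ∃ D : Finset V, isIndependentSet H D ∧ D.card = k}

/-- An efficient dominating set: every vertex is dominated by exactly one
member of `D`. -/
def isEfficientDominatingSet {V : Type*} (H : SimpleGraph V) (D : Finset V) : Prop :=
  ∀ v : V, ∃! u : V, u ∈ D ∧ (u = v ∨ H.Adj u v)

/-- The generalized lexicographic product `G[Φ]` of a graph `G` on `Fin n` and a
family `Φ = (F 0, …, F (n-1))` of pairwise disjoint graphs: the `F i` are induced
subgraphs, and vertices in distinct `F i`, `F j` are adjacent iff `i j ∈ E(G)`. -/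
def GLP {n : ℕ} (G : SimpleGraph (Fin n)) {V : Fin n → Type*}
    (F : ∀ i, SimpleGraph (V i)) : SimpleGraph (Σ i, V i) where
  Adj x y := (x.1 ≠ y.1 ∧ G.Adj x.1 y.1) ∨ ∃ h : x.1 = y.1, (F y.1).Adj (h ▸ x.2) y.2
  symm := by
    constructor
    rintro ⟨i, a⟩ ⟨j, b⟩ (⟨hne, hadj⟩ | ⟨h, hadj⟩)
    · exact Or.inl ⟨fun hh => hne hh.symm, hadj.symm⟩
    · dsimp only at h
      subst h
      exact Or.inr ⟨rfl, hadj.symm⟩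
  loopless := by
    constructor
    rintro ⟨i, a⟩ (⟨hne, _⟩ | ⟨h, hadj⟩)
    · exact hne rfl
    · exact (F i).irrefl hadj

/-- The number of vertices of `D ∩ V(F i)`. -/
noncomputable def layerCount {n : ℕ} {V : Fin n → Type*} [∀ i, Fintype (V i)]
    (D : Finset (Σ i, V i)) (i : Fin n) : ℕ :=
  (D.filter (fun x => x.1 = i)).card


section Helpers

set_option linter.unusedSectionVars false

variable {W : Type*} [Fintype W] [DecidableEq W] {H : SimpleGraph W}

lemma dom_mono {D D' : Finset W} (h : D ⊆ D') (hD : isDominatingSet H D) :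
    isDominatingSet H D' := by
  intro v
  rcases hD v with hv | ⟨u, hu, hadj⟩
  · exact Or.inl (h hv)
  · exact Or.inr ⟨u, h hu, hadj⟩

lemma tdom_mono {D D' : Finset W} (h : D ⊆ D') (hD : isTotalDominatingSet H D) :
    isTotalDominatingSet H D' := by
  intro v
  rcases hD v with ⟨u, hu, hadj⟩
  exact ⟨u, h hu, hadj⟩

lemma minimal_dom_of_erase {D : Finset W} (hD : isDominatingSet H D)
    (h : ∀ x ∈ D, ¬ isDominatingSet H (D.erase x)) : isMinimalDominatingSet H D := by
  refine ⟨hD, fun D' hss hD' => ?_⟩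
  obtain ⟨x, hxD, hxD'⟩ := Finset.exists_of_ssubset hss
  exact h x hxD (dom_mono (fun y hy => Finset.mem_erase.2
    ⟨fun he => hxD' (he ▸ hy), hss.1 hy⟩) hD')

lemma minimal_tdom_of_erase {D : Finset W} (hD : isTotalDominatingSet H D)
    (h : ∀ x ∈ D, ¬ isTotalDominatingSet H (D.erase x)) : isMinimalTotalDominatingSet H D := by
  refine ⟨hD, fun D' hss hD' => ?_⟩
  obtain ⟨x, hxD, hxD'⟩ := Finset.exists_of_ssubset hss
  exact h x hxD (tdom_mono (fun y hy => Finset.mem_erase.2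
    ⟨fun he => hxD' (he ▸ hy), hss.1 hy⟩) hD')

lemma exists_minimal_dom_subset {D : Finset W} (hD : isDominatingSet H D) :
    ∃ M ⊆ D, isMinimalDominatingSet H M := by
  classical
  obtain ⟨M, hM, hmin⟩ := Finset.exists_min_image
    (D.powerset.filter (fun C => isDominatingSet H C)) Finset.card
    ⟨D, by simp [hD]⟩
  simp only [Finset.mem_filter, Finset.mem_powerset] at hM
  refine ⟨M, hM.1, hM.2, fun D' hss hD' => ?_⟩
  have := hmin D' (by simp only [Finset.mem_filter, Finset.mem_powerset]; exact ⟨hss.subset.trans hM.1, hD'⟩)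
  exact absurd this (by simpa using Finset.card_lt_card hss)

lemma exists_minimal_tdom_subset {D : Finset W} (hD : isTotalDominatingSet H D) :
    ∃ M ⊆ D, isMinimalTotalDominatingSet H M := by
  classical
  obtain ⟨M, hM, hmin⟩ := Finset.exists_min_image
    (D.powerset.filter (fun C => isTotalDominatingSet H C)) Finset.card
    ⟨D, by simp [hD]⟩
  simp only [Finset.mem_filter, Finset.mem_powerset] at hM
  refine ⟨M, hM.1, hM.2, fun D' hss hD' => ?_⟩
  have := hmin D' (by simp only [Finset.mem_filter, Finset.mem_powerset]; exact ⟨hss.subset.trans hM.1, hD'⟩)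
  exact absurd this (by simpa using Finset.card_lt_card hss)

lemma exists_maximal_indep_superset {I : Finset W} (hI : isIndependentSet H I) :
    ∃ J, I ⊆ J ∧ isMaximalIndependentSet H J := by
  classical
  obtain ⟨J, hJ, hmax⟩ := Finset.exists_max_image
    (Finset.univ.powerset.filter (fun C => I ⊆ C ∧ isIndependentSet H C)) Finset.card
    ⟨I, by simp [hI]⟩
  simp only [Finset.mem_filter, Finset.mem_powerset] at hJ
  refine ⟨J, hJ.2.1, hJ.2.2, fun D' hss hD' => ?_⟩
  have := hmax D' (by simp only [Finset.mem_filter, Finset.mem_powerset]; exact ⟨Finset.subset_univ _, hJ.2.1.trans hss.subset, hD'⟩)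
  exact absurd this (by simpa using Finset.card_lt_card hss)

lemma maxIndep_minimalDom {D : Finset W} (hD : isMaximalIndependentSet H D) :
    isMinimalDominatingSet H D := by
  classical
  have hdom : isDominatingSet H D := by
    intro v
    by_cases hv : v ∈ D
    · exact Or.inl hv
    · right
      by_contra hno
      push_neg at hno
      refine hD.2 (insert v D) (Finset.ssubset_insert hv) ?_
      intro a ha b hb hadj
      rcases Finset.mem_insert.1 ha with ha1 | ha1
      · rcases Finset.mem_insert.1 hb with hb1 | hb1
        · subst ha1; subst hb1; exact H.loopless.irrefl _ hadj
        · exact hno b hb1 (ha1 ▸ hadj).symm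
      · rcases Finset.mem_insert.1 hb with hb1 | hb1
        · exact hno a ha1 (hb1 ▸ hadj)
        · exact hD.1 a ha1 b hb1 hadj
  refine minimal_dom_of_erase hdom (fun x hx hcon => ?_)
  rcases hcon x with hmem | ⟨u, hu, hadj⟩
  · exact (Finset.notMem_erase x D) hmem
  · exact hD.1 u (Finset.mem_of_mem_erase hu) x hx hadj

lemma not_dom_empty [Nonempty W] : ¬ isDominatingSet H (∅ : Finset W) := by
  intro h
  rcases h (Classical.arbitrary W) with hv | ⟨u, hu, _⟩
  · exact absurd hv (Finset.notMem_empty _)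
  · exact absurd hu (Finset.notMem_empty _)

lemma domNum_le_card' {D : Finset W} (hD : isDominatingSet H D) : domNum H ≤ D.card :=
  Nat.sInf_le ⟨D, hD, rfl⟩

lemma exists_minimal_dom_card_domNum (H : SimpleGraph W) :
    ∃ D : Finset W, isMinimalDominatingSet H D ∧ D.card = domNum H := by
  classical
  have huniv : isDominatingSet H (Finset.univ : Finset W) :=
    fun v => Or.inl (Finset.mem_univ v)
  have hne : {k | ∃ D : Finset W, isDominatingSet H D ∧ D.card = k}.Nonempty :=
    ⟨_, Finset.univ, huniv, rfl⟩
  obtain ⟨D, hD, hcard⟩ := Nat.sInf_mem hne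
  have hcard' : D.card = domNum H := hcard
  refine ⟨D, ⟨hD, fun D' hss hD' => ?_⟩, hcard'⟩
  have h1 : domNum H ≤ D'.card := domNum_le_card' hD'
  have h2 : D'.card < D.card := Finset.card_lt_card hss
  omega

lemma domNum_le_card {D : Finset W} (hD : isDominatingSet H D) : domNum H ≤ D.card :=
  domNum_le_card' hD

lemma welldom_card (h : WellDominated H) {D : Finset W} (hD : isMinimalDominatingSet H D) :
    D.card = domNum H := by
  obtain ⟨M, hM, hMc⟩ := exists_minimal_dom_card_domNum H
  exact (h D M hD hM).trans hMc

lemma one_le_domNum [Nonempty W] (H : SimpleGraph W) : 1 ≤ domNum H := by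
  obtain ⟨D, hD, hc⟩ := exists_minimal_dom_card_domNum H
  rcases Nat.eq_zero_or_pos (domNum H) with h0 | h1
  · rw [h0] at hc
    rw [Finset.card_eq_zero] at hc
    exact absurd (hc ▸ hD.1) not_dom_empty
  · exact h1

lemma singleton_not_dom (h2 : 2 ≤ domNum H) (a : W) : ¬ isDominatingSet H {a} := by
  intro h
  have := domNum_le_card h
  simp at this
  omega

lemma minimal_dom_nonempty [Nonempty W] {D : Finset W} (hD : isMinimalDominatingSet H D) :
    D.Nonempty := by
  rcases Finset.eq_empty_or_nonempty D with rfl | h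
  · exact absurd hD.1 not_dom_empty
  · exact h

lemma dominating_nonempty [Nonempty W] {D : Finset W} (hD : isDominatingSet H D) :
    D.Nonempty := by
  rcases Finset.eq_empty_or_nonempty D with rfl | h
  · exact absurd hD not_dom_empty
  · exact h

end Helpers


section GLPHelpers

set_option linter.unusedSectionVars false
set_option maxHeartbeats 1000000

lemma sigma_snd_eq {α : Type*} {β : α → Type*} {i : α} {a b : β i}
    (h : (⟨i, a⟩ : Σ j, β j) = ⟨i, b⟩) : a = b := by
  simpa using h

variable {n : ℕ} {G : SimpleGraph (Fin n)} {V : Fin n → Type} [∀ i, Fintype (V i)]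
  {F : ∀ i, SimpleGraph (V i)}

lemma glp_adj_same {i : Fin n} {a b : V i} :
    (GLP G F).Adj ⟨i, a⟩ ⟨i, b⟩ ↔ (F i).Adj a b := by
  constructor
  · rintro (⟨hne, _⟩ | ⟨h, hadj⟩)
    · exact absurd rfl hne
    · exact hadj
  · intro h
    exact Or.inr ⟨rfl, h⟩

lemma glp_adj_ne {i j : Fin n} (hij : i ≠ j) {a : V i} {b : V j} :
    (GLP G F).Adj ⟨i, a⟩ ⟨j, b⟩ ↔ G.Adj i j := by
  constructor
  · rintro (⟨_, h⟩ | ⟨h, _⟩)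
    · exact h
    · exact absurd h hij
  · intro h
    exact Or.inl ⟨hij, h⟩

lemma maxIndep_adj {W : Type*} [Fintype W] [DecidableEq W] {H : SimpleGraph W} {S : Finset W}
    (hS : isMaximalIndependentSet H S) {k : W} (hk : k ∉ S) : ∃ j ∈ S, H.Adj j k := by
  rcases (maxIndep_minimalDom hS).1 k with h | h
  · exact absurd h hk
  · exact h

/-- Family A': a maximal independent set of `G` with a minimal dominating set of `F i`
in each layer gives a minimal dominating set of `G[F]`. -/
lemma sigma_minimal_dom (hV : ∀ i, 2 ≤ Fintype.card (V i))
    {S : Finset (Fin n)} (hS : isMaximalIndependentSet G S)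
    {A : ∀ i, Finset (V i)} (hA : ∀ i ∈ S, isMinimalDominatingSet (F i) (A i)) :
    isMinimalDominatingSet (GLP G F) (S.sigma A) := by
  have hVne : ∀ i, Nonempty (V i) := fun i => Fintype.card_pos_iff.mp (by have := hV i; omega)
  have hdom : isDominatingSet (GLP G F) (S.sigma A) := by
    rintro ⟨k, c⟩
    by_cases hk : k ∈ S
    · rcases (hA k hk).1 c with hc | ⟨u, hu, hadj⟩
      · exact Or.inl (Finset.mem_sigma.2 ⟨hk, hc⟩)
      · exact Or.inr ⟨⟨k, u⟩, Finset.mem_sigma.2 ⟨hk, hu⟩, glp_adj_same.2 hadj⟩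
    · obtain ⟨j, hj, hadj⟩ := maxIndep_adj hS hk
      have hAne : (A j).Nonempty := by
        have := hVne j
        exact dominating_nonempty (hA j hj).1
      obtain ⟨u, hu⟩ := hAne
      exact Or.inr ⟨⟨j, u⟩, Finset.mem_sigma.2 ⟨hj, hu⟩,
        (glp_adj_ne (G.ne_of_adj hadj)).2 hadj⟩
  refine minimal_dom_of_erase hdom ?_
  rintro ⟨j, xa⟩ hx hcon
  rw [Finset.mem_sigma] at hx
  have hjS : j ∈ S := hx.1
  have hxaA : xa ∈ A j := hx.2
  have herase := (hA j hjS).2 ((A j).erase xa) (Finset.erase_ssubset hxaA)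
  rw [isDominatingSet] at herase
  push_neg at herase
  obtain ⟨v, hv1, hv2⟩ := herase
  rcases hcon ⟨j, v⟩ with hmem | ⟨⟨l, u⟩, hu, hadj⟩
  · have hne := Finset.ne_of_mem_erase hmem
    have hvA : v ∈ A j := (Finset.mem_sigma.1 (Finset.mem_of_mem_erase hmem)).2
    exact hv1 (Finset.mem_erase_of_ne_of_mem (fun h => hne (by rw [h])) hvA)
  · have hneu := Finset.ne_of_mem_erase hu
    have hmem' := Finset.mem_sigma.1 (Finset.mem_of_mem_erase hu)
    have hlS : l ∈ S := hmem'.1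
    have huA : u ∈ A l := hmem'.2
    by_cases hlj : l = j
    · subst hlj
      exact hv2 u (Finset.mem_erase_of_ne_of_mem (fun h => hneu (by rw [h])) huA)
        (glp_adj_same.1 hadj)
    · exact hS.1 l hlS j hjS ((glp_adj_ne hlj).1 hadj)

/-- Family B: when no layer has a dominating singleton, one vertex atop each
layer of a minimal total dominating set of `G` is a minimal dominating set of `G[F]`. -/
lemma tdom_sigma_minimal_dom (hV : ∀ i, 2 ≤ Fintype.card (V i))
    (h2 : ∀ (i : Fin n) (a : V i), ¬ isDominatingSet (F i) {a})
    {T : Finset (Fin n)} (hT : isMinimalTotalDominatingSet G T) (v : ∀ i, V i) :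
    isMinimalDominatingSet (GLP G F) (T.sigma (fun i => {v i})) := by
  have hdom : isDominatingSet (GLP G F) (T.sigma (fun i => {v i})) := by
    rintro ⟨k, c⟩
    obtain ⟨j, hj, hadj⟩ := hT.1 k
    exact Or.inr ⟨⟨j, v j⟩, Finset.mem_sigma.2 ⟨hj, Finset.mem_singleton_self _⟩,
      (glp_adj_ne (G.ne_of_adj hadj)).2 hadj⟩
  refine minimal_dom_of_erase hdom ?_
  rintro ⟨i, xa⟩ hx hcon
  rw [Finset.mem_sigma] at hx
  have hiT : i ∈ T := hx.1
  have hxa : xa = v i := Finset.mem_singleton.1 hx.2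
  have herase := hT.2 (T.erase i) (Finset.erase_ssubset hiT)
  rw [isTotalDominatingSet] at herase
  push_neg at herase
  obtain ⟨k, hk⟩ := herase
  have hki : k ≠ i := by
    rintro rfl
    obtain ⟨j, hj, hadj⟩ := hT.1 k
    exact hk j (Finset.mem_erase_of_ne_of_mem (G.ne_of_adj hadj) hj) hadj
  have hsing := h2 k (v k)
  rw [isDominatingSet] at hsing
  push_neg at hsing
  obtain ⟨c, hc1, hc2⟩ := hsing
  rcases hcon ⟨k, c⟩ with hmem | ⟨⟨l, u⟩, hu, hadj⟩
  · exact hc1 (Finset.mem_sigma.1 (Finset.mem_of_mem_erase hmem)).2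
  · have hneu := Finset.ne_of_mem_erase hu
    have hmem' := Finset.mem_sigma.1 (Finset.mem_of_mem_erase hu)
    have hlT : l ∈ T := hmem'.1
    have hu2 : u = v l := Finset.mem_singleton.1 hmem'.2
    by_cases hlk : l = k
    · subst hlk
      exact hc2 u (Finset.mem_singleton.2 hu2) (glp_adj_same.1 hadj)
    · have hli : l ≠ i := by
        rintro rfl
        exact hneu (by rw [hu2, hxa])
      exact hk l (Finset.mem_erase_of_ne_of_mem hli hlT) ((glp_adj_ne hlk).1 hadj)

lemma card_sigma_singletons {T : Finset (Fin n)} (v : ∀ i, V i) :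
    (T.sigma (fun i => ({v i} : Finset (V i)))).card = T.card := by
  rw [Finset.card_sigma]
  simp

/-- When all layers are complete: fibers of a minimal dominating set are singletons. -/
lemma fibers_singleton (hF : ∀ i, F i = ⊤) {D : Finset ((i : Fin n) × V i)}
    (hD : isMinimalDominatingSet (GLP G F) D) :
    ∀ x ∈ D, ∀ y ∈ D, x.1 = y.1 → x = y := by
  rintro ⟨i, b⟩ hx ⟨i', b'⟩ hy h
  dsimp only at h
  subst h
  by_contra hne
  have hbne : b ≠ b' := fun h => hne (by rw [h])
  apply hD.2 (D.erase ⟨i, b'⟩) (Finset.erase_ssubset hy)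
  intro w
  rcases hD.1 w with hw | ⟨u, hu, hadj⟩
  · by_cases hww : w = ⟨i, b'⟩
    · subst hww
      refine Or.inr ⟨⟨i, b⟩,
        Finset.mem_erase_of_ne_of_mem (fun h => hbne (sigma_snd_eq h)) hx, ?_⟩
      refine glp_adj_same.2 ?_
      rw [hF i]
      exact hbne
    · exact Or.inl (Finset.mem_erase_of_ne_of_mem hww hw)
  · by_cases huu : u = ⟨i, b'⟩
    · subst huu
      obtain ⟨k, c⟩ := w
      by_cases hki : k = i
      · subst hki
        have hFadj : (F k).Adj b' c := glp_adj_same.1 hadj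
        have hcb' : c ≠ b' := fun h => (F k).loopless.irrefl _ (h ▸ hFadj)
        by_cases hcb : c = b
        · subst hcb
          exact Or.inl (Finset.mem_erase_of_ne_of_mem (fun h => hbne (sigma_snd_eq h)) hx)
        · refine Or.inr ⟨⟨k, b⟩,
            Finset.mem_erase_of_ne_of_mem (fun h => hbne (sigma_snd_eq h)) hx, ?_⟩
          refine glp_adj_same.2 ?_
          rw [hF k]
          exact fun h => hcb h.symm
      · have hik : i ≠ k := fun h => hki h.symm
        have hGadj : G.Adj i k := (glp_adj_ne hik).1 hadj
        exact Or.inr ⟨⟨i, b⟩,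
          Finset.mem_erase_of_ne_of_mem (fun h => hbne (sigma_snd_eq h)) hx,
          (glp_adj_ne hik).2 hGadj⟩
    · exact Or.inr ⟨u, Finset.mem_erase_of_ne_of_mem huu hu, hadj⟩

/-- Projection of a minimal dominating set of `G[F]` (complete layers). -/
lemma proj_minimal_dom (hV : ∀ i, 2 ≤ Fintype.card (V i)) (hF : ∀ i, F i = ⊤)
    {D : Finset ((i : Fin n) × V i)} (hD : isMinimalDominatingSet (GLP G F) D) :
    isMinimalDominatingSet G (D.image Sigma.fst) ∧ D.card = (D.image Sigma.fst).card := by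
  have hVne : ∀ i, Nonempty (V i) := fun i => Fintype.card_pos_iff.mp (by have := hV i; omega)
  have hfib := fibers_singleton hF hD
  have hcard : D.card = (D.image Sigma.fst).card :=
    (Finset.card_image_of_injOn (fun x hx y hy h => hfib x hx y hy h)).symm
  have hdomG : isDominatingSet G (D.image Sigma.fst) := by
    intro k
    by_cases hk : k ∈ D.image Sigma.fst
    · exact Or.inl hk
    · have := hVne k
      obtain ⟨c⟩ := this
      rcases hD.1 ⟨k, c⟩ with hmem | ⟨⟨l, u⟩, hu, hadj⟩
      · exact absurd (Finset.mem_image_of_mem Sigma.fst hmem) hk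
      · have hlk : l ≠ k := by
          rintro rfl
          exact hk (Finset.mem_image_of_mem Sigma.fst hu)
        exact Or.inr ⟨l, Finset.mem_image_of_mem Sigma.fst hu, (glp_adj_ne hlk).1 hadj⟩
  refine ⟨⟨hdomG, fun S' hss hS' => ?_⟩, hcard⟩
  have hsub : D.filter (fun x => x.1 ∈ S') ⊆ D := Finset.filter_subset _ _
  have hstrict : D.filter (fun x => x.1 ∈ S') ⊂ D := by
    rw [Finset.ssubset_iff_of_subset hsub]
    obtain ⟨i, hiD, hiS'⟩ := Finset.exists_of_ssubset hss
    obtain ⟨x, hxD, hx1⟩ := Finset.mem_image.1 hiD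
    refine ⟨x, hxD, ?_⟩
    rw [Finset.mem_filter]
    rintro ⟨-, hxs⟩
    rw [hx1] at hxs
    exact hiS' hxs
  apply hD.2 _ hstrict
  rintro ⟨k, c⟩
  by_cases hk : k ∈ S'
  · obtain ⟨x, hxD, hx1⟩ := Finset.mem_image.1 (hss.subset hk)
    obtain ⟨k', b⟩ := x
    dsimp only at hx1
    subst hx1
    have hxF : (⟨k', b⟩ : (i : Fin n) × V i) ∈ D.filter (fun x => x.1 ∈ S') :=
      Finset.mem_filter.2 ⟨hxD, hk⟩
    by_cases hcb : c = b
    · subst hcb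
      exact Or.inl hxF
    · refine Or.inr ⟨⟨k', b⟩, hxF, ?_⟩
      refine glp_adj_same.2 ?_
      rw [hF k']
      exact fun h => hcb h.symm
  · rcases hS' k with hk' | ⟨j, hj, hadj⟩
    · exact absurd hk' hk
    · obtain ⟨x, hxD, hx1⟩ := Finset.mem_image.1 (hss.subset hj)
      obtain ⟨j', b⟩ := x
      dsimp only at hx1
      subst hx1
      exact Or.inr ⟨⟨j', b⟩, Finset.mem_filter.2 ⟨hxD, hj⟩,
        (glp_adj_ne (G.ne_of_adj hadj)).2 hadj⟩

/-- Lift of a minimal dominating set of `G` (complete layers). -/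
lemma lift_minimal_dom (hF : ∀ i, F i = ⊤) (v : ∀ i, V i)
    {S : Finset (Fin n)} (hS : isMinimalDominatingSet G S) :
    isMinimalDominatingSet (GLP G F) (S.sigma (fun i => {v i})) := by
  have hdom : isDominatingSet (GLP G F) (S.sigma (fun i => {v i})) := by
    rintro ⟨k, c⟩
    rcases hS.1 k with hk | ⟨j, hj, hadj⟩
    · by_cases hc : c = v k
      · subst hc
        exact Or.inl (Finset.mem_sigma.2 ⟨hk, Finset.mem_singleton_self _⟩)
      · refine Or.inr ⟨⟨k, v k⟩, Finset.mem_sigma.2 ⟨hk, Finset.mem_singleton_self _⟩, ?_⟩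
        refine glp_adj_same.2 ?_
        rw [hF k]
        exact fun h => hc h.symm
    · exact Or.inr ⟨⟨j, v j⟩, Finset.mem_sigma.2 ⟨hj, Finset.mem_singleton_self _⟩,
        (glp_adj_ne (G.ne_of_adj hadj)).2 hadj⟩
  refine minimal_dom_of_erase hdom ?_
  rintro ⟨i, xa⟩ hx hcon
  rw [Finset.mem_sigma] at hx
  have hiS : i ∈ S := hx.1
  have hxa : xa = v i := Finset.mem_singleton.1 hx.2
  have herase := hS.2 (S.erase i) (Finset.erase_ssubset hiS)
  rw [isDominatingSet] at herase
  push_neg at herase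
  obtain ⟨k, hk1, hk2⟩ := herase
  rcases hcon ⟨k, v k⟩ with hmem | ⟨⟨l, u⟩, hu, hadj⟩
  · have hne := Finset.ne_of_mem_erase hmem
    have hkS : k ∈ S := (Finset.mem_sigma.1 (Finset.mem_of_mem_erase hmem)).1
    have hki : k = i := by
      by_contra h
      exact hk1 (Finset.mem_erase_of_ne_of_mem h hkS)
    subst hki
    exact hne (by rw [hxa])
  · have hneu := Finset.ne_of_mem_erase hu
    have hmem' := Finset.mem_sigma.1 (Finset.mem_of_mem_erase hu)
    have hlS : l ∈ S := hmem'.1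
    have hu2 : u = v l := Finset.mem_singleton.1 hmem'.2
    have hli : l ≠ i := by
      rintro rfl
      exact hneu (by rw [hu2, hxa])
    by_cases hlk : l = k
    · subst hlk
      exact hk1 (Finset.mem_erase_of_ne_of_mem hli hlS)
    · exact hk2 l (Finset.mem_erase_of_ne_of_mem hli hlS) ((glp_adj_ne hlk).1 hadj)

end GLPHelpers


section GraphLemmas

set_option linter.unusedSectionVars false
set_option maxHeartbeats 1000000

variable {n : ℕ} {G : SimpleGraph (Fin n)}

lemma exists_adj_of_connected (hG : G.Connected) (hn : 2 ≤ n) (v : Fin n) :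
    ∃ u, G.Adj u v := by
  have h1 : 1 < Fintype.card (Fin n) := by rw [Fintype.card_fin]; omega
  obtain ⟨w, hw⟩ := Fintype.exists_ne_of_one_lt_card h1 v
  obtain ⟨p⟩ := hG.preconnected v w
  cases p with
  | nil => exact absurd rfl hw
  | cons h q => exact ⟨_, h.symm⟩

lemma exists_p3 (hG : G.Connected) (hnc : G ≠ ⊤) :
    ∃ x y z, G.Adj z x ∧ G.Adj z y ∧ ¬ G.Adj x y ∧ x ≠ y := by
  by_contra hno
  push_neg at hno
  apply hnc
  ext a b
  simp only [SimpleGraph.top_adj]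
  constructor
  · exact fun h => G.ne_of_adj h
  · intro hab
    have key : ∀ (c d : Fin n), G.Reachable c d → c = d ∨ G.Adj c d := by
      intro c d hr
      obtain ⟨p⟩ := hr
      induction p with
      | nil => exact Or.inl rfl
      | @cons u v' w h q ih =>
        rcases ih with rfl | hadj
        · exact Or.inr h
        · by_cases hcd : G.Adj u w
          · exact Or.inr hcd
          · exact Or.inl (hno u w v' h.symm hadj hcd)
    rcases key a b (hG.preconnected a b) with rfl | h
    · exact absurd rfl hab
    · exact h

lemma pair_minimal_tdom_top {u w : Fin n} (h : u ≠ w) :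
    isMinimalTotalDominatingSet (⊤ : SimpleGraph (Fin n)) {u, w} := by
  have htd : isTotalDominatingSet (⊤ : SimpleGraph (Fin n)) {u, w} := by
    intro v
    by_cases hv : v = u
    · subst hv
      exact ⟨w, Finset.mem_insert_of_mem (Finset.mem_singleton_self _),
        (SimpleGraph.top_adj _ _).2 (Ne.symm h)⟩
    · exact ⟨u, Finset.mem_insert_self _ _, (SimpleGraph.top_adj _ _).2 (fun hh => hv hh.symm)⟩
  refine minimal_tdom_of_erase htd ?_
  intro x hx hcon
  rcases Finset.mem_insert.1 hx with hx1 | hx1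
  · subst hx1
    obtain ⟨t, ht, hadj⟩ := hcon w
    have ht2 := Finset.mem_of_mem_erase ht
    have htne := Finset.ne_of_mem_erase ht
    rcases Finset.mem_insert.1 ht2 with ht3 | ht3
    · exact htne ht3
    · rw [Finset.mem_singleton] at ht3
      subst ht3
      exact ((SimpleGraph.top_adj _ _).1 hadj) rfl
  · rw [Finset.mem_singleton] at hx1
    subst hx1
    obtain ⟨t, ht, hadj⟩ := hcon u
    have ht2 := Finset.mem_of_mem_erase ht
    have htne := Finset.ne_of_mem_erase ht
    rcases Finset.mem_insert.1 ht2 with ht3 | ht3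
    · subst ht3
      exact ((SimpleGraph.top_adj _ _).1 hadj) rfl
    · rw [Finset.mem_singleton] at ht3
      exact htne ht3

lemma singleton_maxIndep_top (x : Fin n) :
    isMaximalIndependentSet (⊤ : SimpleGraph (Fin n)) {x} := by
  constructor
  · intro a ha b hb hadj
    rw [Finset.mem_singleton] at ha hb
    subst ha; subst hb
    exact ((SimpleGraph.top_adj _ _).1 hadj) rfl
  · intro D' hss hind
    obtain ⟨w, hwD, hwx⟩ := Finset.exists_of_ssubset hss
    have hx : x ∈ D' := hss.subset (Finset.mem_singleton_self x)
    have hwne : w ≠ x := fun h => hwx (by rw [h]; exact Finset.mem_singleton_self x)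
    exact hind w hwD x hx ((SimpleGraph.top_adj _ _).2 hwne)

lemma complete_of_welldom_one {W : Type*} [Fintype W] [DecidableEq W] [Nonempty W]
    {H : SimpleGraph W} (hwd : WellDominated H) (h1 : domNum H = 1) : H = ⊤ := by
  ext a b
  simp only [SimpleGraph.top_adj]
  constructor
  · exact fun h => H.ne_of_adj h
  · intro hab
    have hind : isIndependentSet H {b} := by
      intro u hu v hv hadj
      rw [Finset.mem_singleton] at hu hv
      subst hu; subst hv
      exact H.loopless.irrefl _ hadj
    obtain ⟨J, hbJ, hJ⟩ := exists_maximal_indep_superset hind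
    have hJc : J.card = 1 := by
      rw [welldom_card hwd (maxIndep_minimalDom hJ), h1]
    obtain ⟨c, hc⟩ := Finset.card_eq_one.1 hJc
    have hbc : b = c := by
      have := hbJ (Finset.mem_singleton_self b)
      rw [hc, Finset.mem_singleton] at this
      exact this
    subst hbc
    have hanotJ : a ∉ J := by
      rw [hc, Finset.mem_singleton]
      exact hab
    have := hJ.2 _ (Finset.ssubset_insert hanotJ)
    by_contra hnadj
    apply this
    intro u hu v hv hadj
    rcases Finset.mem_insert.1 hu with hu1 | hu1
    · rcases Finset.mem_insert.1 hv with hv1 | hv1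
      · subst hu1; subst hv1; exact H.loopless.irrefl _ hadj
      · rw [hc, Finset.mem_singleton] at hv1
        subst hu1; subst hv1
        exact hnadj hadj
    · rw [hc, Finset.mem_singleton] at hu1
      rcases Finset.mem_insert.1 hv with hv1 | hv1
      · subst hu1; subst hv1
        exact hnadj hadj.symm
      · rw [hc, Finset.mem_singleton] at hv1
        subst hu1; subst hv1
        exact H.loopless.irrefl _ hadj

lemma exists_small_tdom (hG : G.Connected) (hn : 2 ≤ n) {x y z : Fin n}
    (hzx : G.Adj z x) (hzy : G.Adj z y) (hxy : ¬ G.Adj x y) (hxyne : x ≠ y)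
    {K : ℕ} (hK : ∀ S : Finset (Fin n), isMaximalIndependentSet G S → S.card = K) :
    ∃ T : Finset (Fin n), isTotalDominatingSet G T ∧ T.card + 1 ≤ 2 * K := by
  classical
  set P : Finset (Fin n) := Finset.univ.filter
    (fun w => ¬G.Adj x w ∧ ¬G.Adj y w ∧ ¬G.Adj z w ∧ w ≠ x ∧ w ≠ y ∧ w ≠ z) with hP
  obtain ⟨B, hB, hBmax⟩ := Finset.exists_max_image
    (P.powerset.filter (fun C => isIndependentSet G C)) Finset.card
    ⟨∅, Finset.mem_filter.2 ⟨Finset.mem_powerset.2 (Finset.empty_subset P),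
      fun u hu => absurd hu (Finset.notMem_empty u)⟩⟩
  rw [Finset.mem_filter, Finset.mem_powerset] at hB
  obtain ⟨hBP, hBind⟩ := hB
  have hPmem : ∀ w ∈ P, ¬G.Adj x w ∧ ¬G.Adj y w ∧ ¬G.Adj z w ∧ w ≠ x ∧ w ≠ y ∧ w ≠ z := by
    intro w hw
    rw [hP, Finset.mem_filter] at hw
    exact hw.2
  have hmaxP : ∀ w ∈ P, w ∉ B → ∃ b ∈ B, G.Adj b w := by
    intro w hwP hwB
    by_contra hno
    push_neg at hno
    have hins : insert w B ∈ P.powerset.filter (fun C => isIndependentSet G C) := by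
      rw [Finset.mem_filter, Finset.mem_powerset]
      constructor
      · exact Finset.insert_subset hwP hBP
      · intro u hu v hv hadj
        rcases Finset.mem_insert.1 hu with hu1 | hu1
        · rcases Finset.mem_insert.1 hv with hv1 | hv1
          · subst hu1; subst hv1; exact G.loopless.irrefl _ hadj
          · subst hu1; exact hno v hv1 hadj.symm
        · rcases Finset.mem_insert.1 hv with hv1 | hv1
          · subst hv1; exact hno u hu1 hadj
          · exact hBind u hu1 v hv1 hadj
    have := hBmax _ hins
    rw [Finset.card_insert_of_notMem hwB] at this
    omega
  have hnb : ∀ v : Fin n, ∃ u, G.Adj u v := exists_adj_of_connected hG hn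
  choose f hf using hnb
  refine ⟨({x, y, z} : Finset (Fin n)) ∪ B ∪ B.image f, ?_, ?_⟩
  · intro w
    by_cases h1 : G.Adj x w
    · exact ⟨x, by simp, h1⟩
    by_cases h2 : G.Adj y w
    · exact ⟨y, by simp, h2⟩
    by_cases h3 : G.Adj z w
    · exact ⟨z, by simp, h3⟩
    by_cases h4 : w = x
    · exact ⟨z, by simp, h4 ▸ hzx⟩
    by_cases h5 : w = y
    · exact ⟨z, by simp, h5 ▸ hzy⟩
    by_cases h6 : w = z
    · exact ⟨x, by simp, h6 ▸ hzx.symm⟩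
    have hwP : w ∈ P := by
      rw [hP, Finset.mem_filter]
      exact ⟨Finset.mem_univ _, h1, h2, h3, h4, h5, h6⟩
    by_cases hw : w ∈ B
    · exact ⟨f w, Finset.mem_union_right _ (Finset.mem_image_of_mem f hw), hf w⟩
    · obtain ⟨b, hb, hadj⟩ := hmaxP w hwP hw
      exact ⟨b, Finset.mem_union_left _ (Finset.mem_union_right _ hb), hadj⟩
  · have hc1 : (({x, y, z} : Finset (Fin n)) ∪ B ∪ B.image f).card ≤ 3 + (B.card + B.card) := by
      have t0 := Finset.card_union_le (({x, y, z} : Finset (Fin n)) ∪ B) (B.image f)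
      have t1 := Finset.card_union_le ({x, y, z} : Finset (Fin n)) B
      have t2 := Finset.card_insert_le x ({y, z} : Finset (Fin n))
      have t3 := Finset.card_insert_le y ({z} : Finset (Fin n))
      have t4 : ({z} : Finset (Fin n)).card = 1 := Finset.card_singleton z
      have t5 : (B.image f).card ≤ B.card := Finset.card_image_le
      omega
    have hxB : x ∉ B := fun h => (hPmem x (hBP h)).2.2.2.1 rfl
    have hyB : y ∉ B := fun h => (hPmem y (hBP h)).2.2.2.2.1 rfl
    have hIind : isIndependentSet G (insert x (insert y B)) := by
      have hprop : ∀ w ∈ insert x (insert y B), w = x ∨ w = y ∨ w ∈ B := by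
        intro w hw
        rcases Finset.mem_insert.1 hw with h | h
        · exact Or.inl h
        · rcases Finset.mem_insert.1 h with h' | h'
          · exact Or.inr (Or.inl h')
          · exact Or.inr (Or.inr h')
      have hBx : ∀ b ∈ B, ¬G.Adj x b := fun b hb => (hPmem b (hBP hb)).1
      have hBy : ∀ b ∈ B, ¬G.Adj y b := fun b hb => (hPmem b (hBP hb)).2.1
      intro u hu v hv hadj
      rcases hprop u hu with rfl | rfl | huB
      · rcases hprop v hv with rfl | rfl | hvB
        · exact G.loopless.irrefl _ hadj
        · exact hxy hadj
        · exact hBx v hvB hadj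
      · rcases hprop v hv with rfl | rfl | hvB
        · exact hxy hadj.symm
        · exact G.loopless.irrefl _ hadj
        · exact hBy v hvB hadj
      · rcases hprop v hv with rfl | rfl | hvB
        · exact hBx u huB hadj.symm
        · exact hBy u huB hadj.symm
        · exact hBind u huB v hvB hadj
    obtain ⟨J, hIJ, hJ⟩ := exists_maximal_indep_superset hIind
    have hJK := hK J hJ
    have hcx : x ∉ insert y B := by
      rw [Finset.mem_insert]
      push_neg
      exact ⟨hxyne, hxB⟩
    have hcard1 : (insert x (insert y B)).card = B.card + 2 := by
      rw [Finset.card_insert_of_notMem hcx, Finset.card_insert_of_notMem hyB]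
    have hsub := Finset.card_le_card hIJ
    omega

end GraphLemmas


section MainHelpers

set_option linter.unusedSectionVars false
set_option maxHeartbeats 1000000

variable {n : ℕ} {G : SimpleGraph (Fin n)} {V : Fin n → Type} [∀ i, Fintype (V i)]
  {F : ∀ i, SimpleGraph (V i)}

/-- If `G[F]` is well-dominated then each layer is well-dominated. -/
lemma forward_F_welldom (hV : ∀ i, 2 ≤ Fintype.card (V i))
    (hwd : WellDominated (GLP G F)) (i : Fin n) : WellDominated (F i) := by
  classical
  have hA0 : ∀ j, ∃ A : Finset (V j), isMinimalDominatingSet (F j) A := by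
    intro j
    obtain ⟨A, hA, -⟩ := exists_minimal_dom_card_domNum (F j)
    exact ⟨A, hA⟩
  choose A0 hA0 using hA0
  have hSi : isIndependentSet G {i} := by
    intro u hu v hv hadj
    rw [Finset.mem_singleton] at hu hv
    subst hu; subst hv
    exact G.loopless.irrefl _ hadj
  obtain ⟨S, hiS, hS⟩ := exists_maximal_indep_superset hSi
  have hiS' : i ∈ S := hiS (Finset.mem_singleton_self i)
  intro D1 D2 hD1 hD2
  have key : ∀ D : Finset (V i), (S.sigma (Function.update A0 i D)).card
      = D.card + ∑ j ∈ S.erase i, (A0 j).card := by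
    intro D
    rw [Finset.card_sigma, ← Finset.add_sum_erase S _ hiS']
    congr 1
    · rw [Function.update_self]
    · apply Finset.sum_congr rfl
      intro j hj
      rw [Function.update_of_ne (Finset.ne_of_mem_erase hj)]
  have hmin : ∀ D : Finset (V i), isMinimalDominatingSet (F i) D →
      isMinimalDominatingSet (GLP G F) (S.sigma (Function.update A0 i D)) := by
    intro D hD
    apply sigma_minimal_dom hV hS
    intro j hj
    by_cases hji : j = i
    · subst hji; rw [Function.update_self]; exact hD
    · rw [Function.update_of_ne hji]; exact hA0 j
  have := hwd _ _ (hmin D1 hD1) (hmin D2 hD2)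
  rw [key D1, key D2] at this
  omega

/-- Backward direction, case (i). -/
lemma backward_wd_complete (hV : ∀ i, 2 ≤ Fintype.card (V i))
    (hF : ∀ i, F i = ⊤) (hGwd : WellDominated G) : WellDominated (GLP G F) := by
  intro D1 D2 h1 h2
  obtain ⟨hm1, hc1⟩ := proj_minimal_dom hV hF h1
  obtain ⟨hm2, hc2⟩ := proj_minimal_dom hV hF h2
  rw [hc1, hc2]
  exact hGwd _ _ hm1 hm2

/-- Backward direction, case (ii). -/
lemma backward_complete_case (hn : 2 ≤ n) (hV : ∀ i, 2 ≤ Fintype.card (V i))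
    (hGtop : G = ⊤) (hFi : ∀ i, WellDominated (F i) ∧ domNum (F i) = 2) :
    WellDominated (GLP G F) := by
  classical
  have hVne : ∀ j, Nonempty (V j) := fun j => Fintype.card_pos_iff.mp (by have := hV j; omega)
  have hNE : Nonempty ((j : Fin n) × V j) :=
    ⟨⟨⟨0, by omega⟩, Classical.arbitrary _⟩⟩
  have hGadj : ∀ {a b : Fin n}, a ≠ b → G.Adj a b := by
    intro a b h
    rw [hGtop]
    exact h
  suffices h : ∀ D, isMinimalDominatingSet (GLP G F) D → D.card = 2 by
    intro D1 D2 h1 h2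
    rw [h D1 h1, h D2 h2]
  intro D hD
  by_cases hsplit : ∃ p ∈ D, ∃ q ∈ D, p.1 ≠ q.1
  · obtain ⟨⟨i, a⟩, hp, ⟨j, b⟩, hq, hij⟩ := hsplit
    dsimp only at hij
    have hpair : isDominatingSet (GLP G F) {⟨i, a⟩, ⟨j, b⟩} := by
      rintro ⟨k, c⟩
      by_cases hki : k = i
      · subst hki
        refine Or.inr ⟨⟨j, b⟩, Finset.mem_insert_of_mem (Finset.mem_singleton_self _), ?_⟩
        exact (glp_adj_ne (Ne.symm hij)).2 (hGadj (Ne.symm hij))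
      · refine Or.inr ⟨⟨i, a⟩, Finset.mem_insert_self _ _, ?_⟩
        have hik : i ≠ k := fun h => hki h.symm
        exact (glp_adj_ne hik).2 (hGadj hik)
    have hsubset : ({⟨i, a⟩, ⟨j, b⟩} : Finset ((l : Fin n) × V l)) ⊆ D := by
      intro t ht
      rcases Finset.mem_insert.1 ht with ht1 | ht1
      · exact ht1 ▸ hp
      · rw [Finset.mem_singleton] at ht1
        exact ht1 ▸ hq
    have heq : ({⟨i, a⟩, ⟨j, b⟩} : Finset ((l : Fin n) × V l)) = D := by
      by_contra hne
      exact hD.2 _ (Finset.ssubset_iff_subset_ne.2 ⟨hsubset, hne⟩) hpair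
    rw [← heq, Finset.card_insert_of_notMem, Finset.card_singleton]
    rw [Finset.mem_singleton]
    intro h
    exact hij (congrArg Sigma.fst h)
  · push_neg at hsplit
    have hDne : D.Nonempty := dominating_nonempty hD.1
    obtain ⟨⟨i, a0⟩, hp0⟩ := hDne
    set A : Finset (V i) := Finset.univ.filter (fun a => ⟨i, a⟩ ∈ D) with hAdef
    have hmemA : ∀ a : V i, a ∈ A ↔ (⟨i, a⟩ : (l : Fin n) × V l) ∈ D := by
      intro a
      rw [hAdef, Finset.mem_filter]
      simp
    have hDA : D = A.image (Sigma.mk i) := by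
      ext ⟨k, c⟩
      simp only [Finset.mem_image]
      constructor
      · intro hw
        have hk : k = i := hsplit _ hw _ hp0
        subst hk
        exact ⟨c, (hmemA c).2 hw, rfl⟩
      · rintro ⟨a, ha, heq⟩
        exact heq ▸ (hmemA a).1 ha
    have hAcard : D.card = A.card := by
      rw [hDA]
      exact Finset.card_image_of_injective _ sigma_mk_injective
    have hAdom : isDominatingSet (F i) A := by
      intro b
      rcases hD.1 ⟨i, b⟩ with hmem | ⟨⟨l, u⟩, hu, hadj⟩
      · exact Or.inl ((hmemA b).2 hmem)
      · have hl : l = i := hsplit _ hu _ hp0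
        subst hl
        exact Or.inr ⟨u, (hmemA u).2 hu, glp_adj_same.1 hadj⟩
    have hAmin : isMinimalDominatingSet (F i) A := by
      refine ⟨hAdom, fun A' hss hA' => ?_⟩
      have hA'ne : A'.Nonempty := by
        have := hVne i
        exact dominating_nonempty hA'
      have himss : A'.image (Sigma.mk i) ⊂ D := by
        rw [hDA]
        refine Finset.ssubset_iff_subset_ne.2
          ⟨Finset.image_subset_image hss.subset, fun h => ?_⟩
        have h1 : (A'.image (Sigma.mk i)).card = A'.card :=
          Finset.card_image_of_injective _ sigma_mk_injective
        have h2 : (A.image (Sigma.mk i)).card = A.card :=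
          Finset.card_image_of_injective _ sigma_mk_injective
        have h3 := Finset.card_lt_card hss
        rw [h] at h1
        omega
      apply hD.2 _ himss
      rintro ⟨k, c⟩
      by_cases hki : k = i
      · subst hki
        rcases hA' c with hc | ⟨u, hu, hadj⟩
        · exact Or.inl (Finset.mem_image_of_mem _ hc)
        · exact Or.inr ⟨⟨k, u⟩, Finset.mem_image_of_mem _ hu, glp_adj_same.2 hadj⟩
      · obtain ⟨u, hu⟩ := hA'ne
        have hik : i ≠ k := fun h => hki h.symm
        exact Or.inr ⟨⟨i, u⟩, Finset.mem_image_of_mem _ hu, (glp_adj_ne hik).2 (hGadj hik)⟩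
    rw [hAcard, welldom_card (hFi i).1 hAmin, (hFi i).2]

end MainHelpers

/-- With `|V(F i)| ≥ 2` and all `F i` sharing the same `γ` and the same `Γ`:
`G[Φ]` is well `γ`-dominated iff either `G` is well `γ`-dominated and every
`F i` is complete, or `G` is complete and every `F i` is well `γ`-dominated
with `γ(F i) = 2`. -/
theorem stmt_19 {n : ℕ} (hn : 2 ≤ n) (G : SimpleGraph (Fin n)) (hG : G.Connected)
    (V : Fin n → Type) [∀ i, Fintype (V i)] (F : ∀ i, SimpleGraph (V i))
    (hV : ∀ i, 2 ≤ Fintype.card (V i))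
    (hγ : ∀ i j, domNum (F i) = domNum (F j))
    (hΓ : ∀ i j, upperDomNum (F i) = upperDomNum (F j)) :
    WellDominated (GLP G F) ↔
      ((WellDominated G ∧ ∀ i, F i = ⊤) ∨
       (G = ⊤ ∧ ∀ i, WellDominated (F i) ∧ domNum (F i) = 2)) := by
  classical
  have hVne : ∀ i, Nonempty (V i) := fun i => Fintype.card_pos_iff.mp (by have := hV i; omega)
  obtain ⟨i0, i1, hne01⟩ : ∃ a b : Fin n, a ≠ b := by
    refine ⟨⟨0, by omega⟩, ⟨1, by omega⟩, ?_⟩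
    intro h
    have := congrArg Fin.val h
    simp at this
  constructor
  · intro hwd
    have hFwd : ∀ i, WellDominated (F i) := fun i => forward_F_welldom hV hwd i
    set γ := domNum (F i0) with hγdef
    have hγall : ∀ i, domNum (F i) = γ := fun i => hγ i i0
    have hγ1 : 1 ≤ γ := by
      have := hVne i0
      exact one_le_domNum (F i0)
    have hFγ : ∀ (i : Fin n) (A : Finset (V i)), isMinimalDominatingSet (F i) A →
        A.card = γ := by
      intro i A hA
      rw [welldom_card (hFwd i) hA, hγall i]
    obtain ⟨D0, hD0⟩ : ∃ D, isMinimalDominatingSet (GLP G F) D := by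
      obtain ⟨M, -, hM⟩ := exists_minimal_dom_subset
        (H := GLP G F) (D := Finset.univ) (fun v => Or.inl (Finset.mem_univ v))
      exact ⟨M, hM⟩
    set c := D0.card with hcdef
    have hc : ∀ D, isMinimalDominatingSet (GLP G F) D → D.card = c :=
      fun D h => hwd D D0 h hD0
    have hmaxind : ∀ S : Finset (Fin n), isMaximalIndependentSet G S → γ * S.card = c := by
      intro S hS
      have hA0 : ∀ j, ∃ A : Finset (V j), isMinimalDominatingSet (F j) A := by
        intro j
        obtain ⟨A, hA, -⟩ := exists_minimal_dom_card_domNum (F j)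
        exact ⟨A, hA⟩
      choose A0 hA0 using hA0
      have hcc := hc _ (sigma_minimal_dom hV hS (fun j _ => hA0 j))
      rw [Finset.card_sigma] at hcc
      rw [← hcc]
      calc γ * S.card = ∑ _j ∈ S, γ := by rw [Finset.sum_const, smul_eq_mul, mul_comm]
      _ = ∑ j ∈ S, (A0 j).card := Finset.sum_congr rfl (fun j _ => (hFγ j (A0 j) (hA0 j)).symm)
    by_cases hγ2 : 2 ≤ γ
    · right
      have hsing : ∀ (i : Fin n) (a : V i), ¬ isDominatingSet (F i) {a} := by
        intro i a
        have := hVne i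
        apply singleton_not_dom
        rw [hγall i]
        exact hγ2
      have htd : ∀ T : Finset (Fin n), isMinimalTotalDominatingSet G T → T.card = c := by
        intro T hT
        have := hc _ (tdom_sigma_minimal_dom hV hsing hT (fun i => Classical.arbitrary (V i)))
        rw [card_sigma_singletons] at this
        exact this
      have hGtop : G = ⊤ := by
        by_contra hne
        obtain ⟨x, y, z, hzx, hzy, hxy, hxyne⟩ := exists_p3 hG hne
        obtain ⟨S0, -, hS0⟩ := exists_maximal_indep_superset
          (I := (∅ : Finset (Fin n))) (fun u hu => absurd hu (Finset.notMem_empty u))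
        set K := S0.card with hKdef
        have hKall : ∀ S, isMaximalIndependentSet G S → S.card = K := by
          intro S hS
          have h1 := hmaxind S hS
          have h2 := hmaxind S0 hS0
          exact Nat.eq_of_mul_eq_mul_left (by omega) (h1.trans h2.symm)
        obtain ⟨T, hTd, hTc⟩ := exists_small_tdom hG hn hzx hzy hxy hxyne hKall
        obtain ⟨T', hT'sub, hT'⟩ := exists_minimal_tdom_subset hTd
        have hT'c := htd T' hT'
        have hT'le : T'.card ≤ T.card := Finset.card_le_card hT'sub
        have h2K : 2 * K ≤ c := by
          calc 2 * K ≤ γ * K := Nat.mul_le_mul_right K hγ2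
          _ = c := hmaxind S0 hS0
        omega
      have hγ2eq : γ = 2 := by
        have h1 : γ * 1 = c := by
          have hs : isMaximalIndependentSet G {i0} := by
            rw [hGtop]
            exact singleton_maxIndep_top i0
          have := hmaxind {i0} hs
          simpa using this
        have hpair : isMinimalTotalDominatingSet G {i0, i1} := by
          rw [hGtop]
          exact pair_minimal_tdom_top hne01
        have h2 := htd _ hpair
        rw [Finset.card_insert_of_notMem (by rw [Finset.mem_singleton]; exact hne01),
          Finset.card_singleton] at h2
        omega
      exact ⟨hGtop, fun i => ⟨hFwd i, by rw [hγall i, hγ2eq]⟩⟩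
    · left
      have hγeq : γ = 1 := by omega
      have hFtop : ∀ i, F i = ⊤ := by
        intro i
        have := hVne i
        exact complete_of_welldom_one (hFwd i) (by rw [hγall i, hγeq])
      refine ⟨?_, hFtop⟩
      intro S1 S2 h1 h2
      have v : ∀ i, V i := fun i => Classical.arbitrary (V i)
      have hc1 := hc _ (lift_minimal_dom hFtop v h1)
      have hc2 := hc _ (lift_minimal_dom hFtop v h2)
      rw [card_sigma_singletons] at hc1 hc2
      omega
  · rintro (⟨hGwd, hFtop⟩ | ⟨hGtop, hFi⟩)
    · exact backward_wd_complete hV hFtop hGwd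
    · exact backward_complete_case hn hV hGtop hFi
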